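/- (Barrow's inequality.) Let A, B, C be affinely independent points of the Euclidean plane and let M be a point of the interior of the triangle ABC (the interior of the convex hull of {A, B, C}). Let A' ∈ [B, C] with ∠BMA' = ∠CMA', let B' ∈ [C, A] with ∠CMB' = ∠AMB', and let C' ∈ [A, B] with ∠AMC' = ∠BMC' (the feet of the internal bisectors of the angles ∠BMC, ∠CMA, ∠AMB from M). Then |MA| + |MB| + |MC| ≥ 2·(|MA'| + |MB'| + |MC'|). -/
import Mathlib

open EuclideanGeometry RealInnerProductSpace



-- ALG lemma
lemma barrow_alg (x y z X Y Z : ℝ) (hX0 : 0 ≤ X) (hY0 : 0 ≤ Y) (hZ0 : 0 ≤ Z)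
    (hY1 : Y ≤ 1) (hZ1 : Z ≤ 1)
    (hid : X^2 + Y^2 + Z^2 + 2*X*Y*Z = 1) :
    2*(y*z*X + z*x*Y + x*y*Z) ≤ x^2 + y^2 + z^2 := by
  set s := Real.sqrt (1 - Z^2) with hsdef
  set t := Real.sqrt (1 - Y^2) with htdef
  have hs : s^2 = 1 - Z^2 := Real.sq_sqrt (by nlinarith)
  have ht : t^2 = 1 - Y^2 := Real.sq_sqrt (by nlinarith)
  have hst : s * t = X + Y*Z := by
    have h1 : s * t = Real.sqrt ((1-Z^2)*(1-Y^2)) := (Real.sqrt_mul (by nlinarith) _).symm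
    have h2 : (1-Z^2)*(1-Y^2) = (X + Y*Z)^2 := by nlinarith
    rw [h1, h2, Real.sqrt_sq (by positivity)]
  have key : x^2+y^2+z^2 - 2*(y*z*X + z*x*Y + x*y*Z)
      = (x - y*Z - z*Y)^2 + (y*s - z*t)^2 := by
    linear_combination (-(y^2)) * hs - z^2 * ht + 2*y*z*hst
  nlinarith [sq_nonneg (x - y*Z - z*Y), sq_nonneg (y*s - z*t), key]


lemma barrow_key {F : Type*} [NormedAddCommGroup F] [InnerProductSpace ℝ F]
    (x y z : F) (hx : x ≠ 0) (hy : y ≠ 0)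
    (hlt : ⟪x, y⟫ < ‖x‖ * ‖y‖) (hgt : -(‖x‖ * ‖y‖) < ⟪x, y⟫)
    (hz : z ∈ segment ℝ x y)
    (hang : InnerProductGeometry.angle x z = InnerProductGeometry.angle y z) :
    2 * ‖z‖^2 ≤ ‖x‖ * ‖y‖ + ⟪x, y⟫ := by
  obtain ⟨s, t, hs, ht, hst, hzdef⟩ := hz
  have hb : 0 < ‖x‖ := norm_pos_iff.2 hx
  have hc : 0 < ‖y‖ := norm_pos_iff.2 hy
  by_cases hz0 : z = 0
  · simp only [hz0, norm_zero]
    nlinarith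
  have hzn : 0 < ‖z‖ := norm_pos_iff.2 hz0
  have hxz : ⟪x, z⟫ = s*‖x‖^2 + t*⟪x,y⟫ := by
    rw [← hzdef, inner_add_right, real_inner_smul_right, real_inner_smul_right,
      real_inner_self_eq_norm_sq]
  have hyz : ⟪y, z⟫ = s*⟪x,y⟫ + t*‖y‖^2 := by
    rw [← hzdef, inner_add_right, real_inner_smul_right, real_inner_smul_right,
      real_inner_self_eq_norm_sq, real_inner_comm y x]
  have hzz : ‖z‖^2 = s^2*‖x‖^2 + 2*(s*t)*⟪x,y⟫ + t^2*‖y‖^2 := by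
    rw [← real_inner_self_eq_norm_sq, ← hzdef]
    simp only [inner_add_left, inner_add_right, real_inner_smul_left, real_inner_smul_right,
      real_inner_self_eq_norm_sq, real_inner_comm y x, norm_smul, Real.norm_eq_abs,
      mul_pow, sq_abs]
    ring
  have hcos := congrArg Real.cos hang
  rw [InnerProductGeometry.cos_angle, InnerProductGeometry.cos_angle] at hcos
  have h1 : ⟪x,z⟫ * (‖y‖*‖z‖) = ⟪y,z⟫ * (‖x‖*‖z‖) :=
    (div_eq_div_iff (by positivity) (by positivity)).1 hcos
  have heq : ⟪x,z⟫ * ‖y‖ = ⟪y,z⟫ * ‖x‖ := by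
    apply mul_right_cancel₀ hzn.ne'
    linear_combination h1
  rw [hxz, hyz] at heq
  have hfac : (‖x‖*‖y‖ - ⟪x,y⟫) * (s*‖x‖ - t*‖y‖) = 0 := by linear_combination heq
  have hsb : s*‖x‖ - t*‖y‖ = 0 := by
    rcases mul_eq_zero.1 hfac with h | h
    · linarith
    · exact h
  have he : s^2*‖x‖^2 + t^2*‖y‖^2 = 2*(s*t)*(‖x‖*‖y‖) := by
    linear_combination (s*‖x‖ - t*‖y‖) * hsb
  have h4 : 4*(s*t) ≤ 1 := by nlinarith [sq_nonneg (s-t)]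
  have hpos : 0 < ‖x‖*‖y‖ + ⟪x,y⟫ := by linarith
  have hzz2 : 2*‖z‖^2 = 4*(s*t)*(‖x‖*‖y‖ + ⟪x,y⟫) := by
    rw [hzz]; linear_combination 2*he
  rw [hzz2]
  nlinarith [mul_nonneg (by linarith : (0:ℝ) ≤ 1 - 4*(s*t)) hpos.le]

lemma barrow_col {F : Type*} [NormedAddCommGroup F] [NormedSpace ℝ F]
    (A B C M d : F) (ra rb rc : ℝ)
    (hA : A - M = ra • d) (hB : B - M = rb • d) (hC : C - M = rc • d) :
    Collinear ℝ ({A, B, C} : Set F) := by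
  rw [collinear_iff_exists_forall_eq_smul_vadd]
  refine ⟨M, d, ?_⟩
  rintro x hx
  simp only [Set.mem_insert_iff, Set.mem_singleton_iff] at hx
  rcases hx with rfl | rfl | rfl
  · exact ⟨ra, by rw [vadd_eq_add, ← hA]; abel⟩
  · exact ⟨rb, by rw [vadd_eq_add, ← hB]; abel⟩
  · exact ⟨rc, by rw [vadd_eq_add, ← hC]; abel⟩

lemma barrow_dep {F : Type*} [NormedAddCommGroup F] [NormedSpace ℝ F]
    (va vb vc : F) (l m n cb cc : ℝ) (hl : l ≠ 0) (hcb : cb ≠ 0)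
    (hcomb : l • va + m • vb + n • vc = 0) (hdep : cb • vb + cc • vc = 0) :
    ∃ ra rb : ℝ, va = ra • vc ∧ vb = rb • vc := by
  have hvb : vb = (-(cc/cb)) • vc := by
    have h1 : cb • vb = (-cc) • vc := by
      rw [neg_smul]; exact eq_neg_of_add_eq_zero_left hdep
    calc vb = cb⁻¹ • (cb • vb) := (inv_smul_smul₀ hcb vb).symm
      _ = cb⁻¹ • ((-cc) • vc) := by rw [h1]
      _ = (-(cc/cb)) • vc := by rw [smul_smul]; congr 1; field_simp
  refine ⟨-(m*(-(cc/cb))+n)/l, -(cc/cb), ?_, hvb⟩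
  have h3 : l • va = (-(m*(-(cc/cb))+n)) • vc := by
    have h2 := hcomb
    rw [add_assoc] at h2
    have h4 := eq_neg_of_add_eq_zero_left h2
    rw [hvb, smul_smul] at h4
    rw [h4]
    module
  calc va = l⁻¹ • (l • va) := (inv_smul_smul₀ hl va).symm
    _ = l⁻¹ • ((-(m*(-(cc/cb))+n)) • vc) := by rw [h3]
    _ = (-(m*(-(cc/cb))+n)/l) • vc := by rw [smul_smul, inv_mul_eq_div]


lemma barrow_gram (u v w : EuclideanSpace ℝ (Fin 2)) (hu : ‖u‖ = 1) (hv : ‖v‖ = 1) (hw : ‖w‖ = 1) :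
    1 + 2 * (⟪v,w⟫ * ⟪w,u⟫ * ⟪u,v⟫) = ⟪v,w⟫^2 + ⟪w,u⟫^2 + ⟪u,v⟫^2 := by
  have exp : ∀ a b : EuclideanSpace ℝ (Fin 2), ⟪a, b⟫ = a 0 * b 0 + a 1 * b 1 := by
    intro a b
    simp [PiLp.inner_apply, RCLike.inner_apply, Fin.sum_univ_two, mul_comm]
  have hu' : u 0^2 + u 1^2 = 1 := by
    have := real_inner_self_eq_norm_sq u
    rw [exp, hu] at this; nlinarith [this]
  have hv' : v 0^2 + v 1^2 = 1 := by
    have := real_inner_self_eq_norm_sq v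
    rw [exp, hv] at this; nlinarith [this]
  have hw' : w 0^2 + w 1^2 = 1 := by
    have := real_inner_self_eq_norm_sq w
    rw [exp, hw] at this; nlinarith [this]
  rw [exp, exp, exp]
  have hA : (u 0*v 1 - u 1*v 0)^2 = 1 - (u 0*v 0 + u 1*v 1)^2 := by
    linear_combination (v 0^2 + v 1^2) * hu' + hv'
  have hB : (u 0*w 1 - u 1*w 0)^2 = 1 - (w 0*u 0 + w 1*u 1)^2 := by
    linear_combination (w 0^2 + w 1^2) * hu' + hw'
  have hC : (u 0*v 1 - u 1*v 0)*(u 0*w 1 - u 1*w 0)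
      = (v 0*w 0 + v 1*w 1) - (w 0*u 0 + w 1*u 1)*(u 0*v 0 + u 1*v 1) := by
    linear_combination (v 0*w 0 + v 1*w 1) * hu'
  have final : (1 - (w 0*u 0 + w 1*u 1)^2)*(1 - (u 0*v 0 + u 1*v 1)^2)
      = ((v 0*w 0 + v 1*w 1) - (w 0*u 0 + w 1*u 1)*(u 0*v 0 + u 1*v 1))^2 := by
    rw [← hA, ← hB, ← hC]; ring
  linear_combination final


lemma barrow_sign {F : Type*} [NormedAddCommGroup F] [InnerProductSpace ℝ F]
    (u v w : F) (hu : ‖u‖ = 1) (hv : ‖v‖ = 1) (hw : ‖w‖ = 1)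
    (l m n : ℝ) (hl : 0 < l) (hm : 0 < m) (hn : 0 < n)
    (h0 : l • u + m • v + n • w = 0) :
    1 + ⟪v,w⟫ + ⟪w,u⟫ + ⟪u,v⟫ ≤ 0 := by
  have hp1 : ⟪v,w⟫ ≤ 1 := by
    have := real_inner_le_norm v w
    rw [hv, hw] at this; linarith
  have hp0 : -1 ≤ ⟪v,w⟫ := by
    have := abs_real_inner_le_norm v w
    rw [hv, hw] at this
    have := abs_le.1 (by linarith [this] : |⟪v,w⟫| ≤ 1)
    linarith [this.1]
  have e1 : l + m*⟪u,v⟫ + n*⟪w,u⟫ = 0 := by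
    have h := congrArg (fun t => ⟪u, t⟫) h0
    simp only [inner_add_right, real_inner_smul_right, real_inner_self_eq_norm_sq, hu,
      inner_zero_right] at h
    linear_combination h + n * (real_inner_comm u w)
  have e2 : l*⟪u,v⟫ + m + n*⟪v,w⟫ = 0 := by
    have h := congrArg (fun t => ⟪v, t⟫) h0
    simp only [inner_add_right, real_inner_smul_right, real_inner_self_eq_norm_sq, hv,
      inner_zero_right] at h
    linear_combination h + l * (real_inner_comm v u)
  have e3 : l*⟪w,u⟫ + m*⟪v,w⟫ + n = 0 := by
    have h := congrArg (fun t => ⟪w, t⟫) h0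
    simp only [inner_add_right, real_inner_smul_right, real_inner_self_eq_norm_sq, hw,
      inner_zero_right] at h
    linear_combination h + m * (real_inner_comm w v)
  have hl2 : l^2 = m^2 + n^2 + 2*m*n*⟪v,w⟫ := by
    linear_combination l*e1 - m*e2 - n*e3
  have hsq : l^2 ≤ (m+n)^2 := by nlinarith [mul_pos hm hn]
  have hlmn : l ≤ m + n := by nlinarith
  have hfinal : l*(1 + ⟪v,w⟫ + ⟪w,u⟫ + ⟪u,v⟫) = (1+⟪v,w⟫)*(l - (m+n)) := by
    linear_combination e2 + e3
  nlinarith [hfinal, hl]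

set_option maxHeartbeats 1000000 in
theorem statement8 (A B C M A' B' C' : EuclideanSpace ℝ (Fin 2))
    (hABC : AffineIndependent ℝ ![A, B, C])
    (hM : M ∈ interior (convexHull ℝ ({A, B, C} : Set (EuclideanSpace ℝ (Fin 2)))))
    (hA' : A' ∈ segment ℝ B C) (ha : ∠ B M A' = ∠ C M A')
    (hB' : B' ∈ segment ℝ C A) (hb : ∠ C M B' = ∠ A M B')
    (hC' : C' ∈ segment ℝ A B) (hc : ∠ A M C' = ∠ B M C') :
    dist M A + dist M B + dist M C ≥ 2 * (dist M A' + dist M B' + dist M C') := by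
  classical
  -- barycentric coordinates
  obtain ⟨l, m, n, hl, hm, hn, hsum, hcomb0⟩ :
      ∃ l m n : ℝ, 0 < l ∧ 0 < m ∧ 0 < n ∧ l + m + n = 1 ∧ l • A + m • B + n • C = M := by
    have hspan : affineSpan ℝ (Set.range ![A, B, C]) = ⊤ := by
      rw [hABC.affineSpan_eq_top_iff_card_eq_finrank_add_one]
      simp
    let bas : AffineBasis (Fin 3) ℝ (EuclideanSpace ℝ (Fin 2)) := ⟨![A, B, C], hABC, hspan⟩
    have hco : ⇑bas = ![A, B, C] := rfl
    have hrange : Set.range ⇑bas = ({A, B, C} : Set (EuclideanSpace ℝ (Fin 2))) := by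
      rw [hco]
      simp [Matrix.range_cons, Matrix.range_empty]
      ext x; simp [or_comm, or_left_comm]
    have hM' : ∀ i, 0 < bas.coord i M := by
      rw [← Set.mem_setOf_eq (p := fun x => ∀ i, 0 < bas.coord i x),
        ← AffineBasis.interior_convexHull]
      rwa [hrange]
    refine ⟨bas.coord 0 M, bas.coord 1 M, bas.coord 2 M, hM' 0, hM' 1, hM' 2, ?_, ?_⟩
    · have := bas.sum_coord_apply_eq_one M
      rwa [Fin.sum_univ_three] at this
    · have := bas.linear_combination_coord_eq_self M
      rw [Fin.sum_univ_three] at this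
      simpa [hco] using this
  set va := A - M with hvadef
  set vb := B - M with hvbdef
  set vc := C - M with hvcdef
  have hcomb : l • va + m • vb + n • vc = 0 := by
    have h1 : l • va + m • vb + n • vc = (l • A + m • B + n • C) - (l + m + n) • M := by
      rw [hvadef, hvbdef, hvcdef]; module
    rw [h1, hcomb0, hsum, one_smul, sub_self]
  have ncol : ¬ Collinear ℝ ({A, B, C} : Set (EuclideanSpace ℝ (Fin 2))) :=
    affineIndependent_iff_not_collinear_set.1 hABC
  -- non-degeneracy handlers for the three pairs
  have nodep₁ : ∀ cb cc : ℝ, cb ≠ 0 → cb • vb + cc • vc = 0 → False := by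
    intro cb cc hcb hdd
    obtain ⟨ra, rb, h1, h2⟩ := barrow_dep va vb vc l m n cb cc hl.ne' hcb hcomb hdd
    exact ncol (barrow_col A B C M vc ra rb 1 h1 h2 (one_smul _ _).symm)
  have nodep₂ : ∀ cb cc : ℝ, cb ≠ 0 → cb • vc + cc • va = 0 → False := by
    intro cb cc hcb hdd
    have hcomb₂ : m • vb + n • vc + l • va = 0 := by
      linear_combination (norm := module) hcomb
    obtain ⟨ra, rb, h1, h2⟩ := barrow_dep vb vc va m n l cb cc hm.ne' hcb hcomb₂ hdd
    have hcol : Collinear ℝ ({B, C, A} : Set (EuclideanSpace ℝ (Fin 2))) :=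
      barrow_col B C A M va ra rb 1 h1 h2 (one_smul _ _).symm
    have hsets : ({B, C, A} : Set (EuclideanSpace ℝ (Fin 2))) = {A, B, C} := by
      ext x; simp; tauto
    exact ncol (hsets ▸ hcol)
  have nodep₃ : ∀ cb cc : ℝ, cb ≠ 0 → cb • va + cc • vb = 0 → False := by
    intro cb cc hcb hdd
    have hcomb₃ : n • vc + l • va + m • vb = 0 := by
      linear_combination (norm := module) hcomb
    obtain ⟨ra, rb, h1, h2⟩ := barrow_dep vc va vb n l m cb cc hn.ne' hcb hcomb₃ hdd
    have hcol : Collinear ℝ ({C, A, B} : Set (EuclideanSpace ℝ (Fin 2))) :=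
      barrow_col C A B M vb ra rb 1 h1 h2 (one_smul _ _).symm
    have hsets : ({C, A, B} : Set (EuclideanSpace ℝ (Fin 2))) = {A, B, C} := by
      ext x; simp; tauto
    exact ncol (hsets ▸ hcol)
  -- the three vectors are nonzero
  have hva0 : va ≠ 0 := fun h =>
    nodep₃ 1 0 one_ne_zero (by rw [h, smul_zero, zero_smul, add_zero])
  have hvb0 : vb ≠ 0 := fun h =>
    nodep₁ 1 0 one_ne_zero (by rw [h, smul_zero, zero_smul, add_zero])
  have hvc0 : vc ≠ 0 := fun h =>
    nodep₂ 1 0 one_ne_zero (by rw [h, smul_zero, zero_smul, add_zero])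
  -- strict Cauchy-Schwarz for the three pairs
  have hPlt : ⟪vb, vc⟫ < ‖vb‖ * ‖vc‖ := by
    rw [inner_lt_norm_mul_iff_real]
    intro heq
    exact nodep₁ ‖vc‖ (-‖vb‖) (norm_ne_zero_iff.2 hvc0)
      (by rw [neg_smul, heq, add_neg_cancel])
  have hPgt : -(‖vb‖ * ‖vc‖) < ⟪vb, vc⟫ := by
    have h2 : ⟪vb, -vc⟫ < ‖vb‖ * ‖-vc‖ := by
      rw [inner_lt_norm_mul_iff_real]
      intro heq
      rw [norm_neg, smul_neg] at heq
      exact nodep₁ ‖vc‖ ‖vb‖ (norm_ne_zero_iff.2 hvc0) (by rw [heq, neg_add_cancel])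
    rw [inner_neg_right, norm_neg] at h2
    linarith
  have hQlt : ⟪vc, va⟫ < ‖vc‖ * ‖va‖ := by
    rw [inner_lt_norm_mul_iff_real]
    intro heq
    exact nodep₂ ‖va‖ (-‖vc‖) (norm_ne_zero_iff.2 hva0)
      (by rw [neg_smul, heq, add_neg_cancel])
  have hQgt : -(‖vc‖ * ‖va‖) < ⟪vc, va⟫ := by
    have h2 : ⟪vc, -va⟫ < ‖vc‖ * ‖-va‖ := by
      rw [inner_lt_norm_mul_iff_real]
      intro heq
      rw [norm_neg, smul_neg] at heq
      exact nodep₂ ‖va‖ ‖vc‖ (norm_ne_zero_iff.2 hva0) (by rw [heq, neg_add_cancel])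
    rw [inner_neg_right, norm_neg] at h2
    linarith
  have hRlt : ⟪va, vb⟫ < ‖va‖ * ‖vb‖ := by
    rw [inner_lt_norm_mul_iff_real]
    intro heq
    exact nodep₃ ‖vb‖ (-‖va‖) (norm_ne_zero_iff.2 hvb0)
      (by rw [neg_smul, heq, add_neg_cancel])
  have hRgt : -(‖va‖ * ‖vb‖) < ⟪va, vb⟫ := by
    have h2 : ⟪va, -vb⟫ < ‖va‖ * ‖-vb‖ := by
      rw [inner_lt_norm_mul_iff_real]
      intro heq
      rw [norm_neg, smul_neg] at heq
      exact nodep₃ ‖vb‖ ‖va‖ (norm_ne_zero_iff.2 hvb0) (by rw [heq, neg_add_cancel])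
    rw [inner_neg_right, norm_neg] at h2
    linarith
  -- unit vectors
  set ua : EuclideanSpace ℝ (Fin 2) := ‖va‖⁻¹ • va with huadef
  set ub : EuclideanSpace ℝ (Fin 2) := ‖vb‖⁻¹ • vb with hubdef
  set uc : EuclideanSpace ℝ (Fin 2) := ‖vc‖⁻¹ • vc with hucdef
  have hua : ‖ua‖ = 1 := norm_smul_inv_norm (𝕜 := ℝ) hva0
  have hub : ‖ub‖ = 1 := norm_smul_inv_norm (𝕜 := ℝ) hvb0
  have huc : ‖uc‖ = 1 := norm_smul_inv_norm (𝕜 := ℝ) hvc0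
  have hvaeq : ‖va‖ • ua = va := by rw [huadef]; exact smul_inv_smul₀ (norm_ne_zero_iff.2 hva0) va
  have hvbeq : ‖vb‖ • ub = vb := by rw [hubdef]; exact smul_inv_smul₀ (norm_ne_zero_iff.2 hvb0) vb
  have hvceq : ‖vc‖ • uc = vc := by rw [hucdef]; exact smul_inv_smul₀ (norm_ne_zero_iff.2 hvc0) vc
  set a := ‖va‖ with hadef
  set b := ‖vb‖ with hbdef
  set c := ‖vc‖ with hcdef
  have ha0 : 0 < a := norm_pos_iff.2 hva0
  have hb0 : 0 < b := norm_pos_iff.2 hvb0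
  have hc0 : 0 < c := norm_pos_iff.2 hvc0
  set P := ⟪ub, uc⟫ with hPdef
  set Q := ⟪uc, ua⟫ with hQdef
  set R := ⟪ua, ub⟫ with hRdef
  have hipP : ⟪vb, vc⟫ = b * c * P := by
    rw [hPdef, ← hvbeq, ← hvceq, real_inner_smul_left, real_inner_smul_right]; ring
  have hipQ : ⟪vc, va⟫ = c * a * Q := by
    rw [hQdef, ← hvceq, ← hvaeq, real_inner_smul_left, real_inner_smul_right]; ring
  have hipR : ⟪va, vb⟫ = a * b * R := by
    rw [hRdef, ← hvaeq, ← hvbeq, real_inner_smul_left, real_inner_smul_right]; ring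
  have hPabs : |P| ≤ 1 := by
    have := abs_real_inner_le_norm ub uc; rw [hub, huc] at this; linarith
  have hQabs : |Q| ≤ 1 := by
    have := abs_real_inner_le_norm uc ua; rw [huc, hua] at this; linarith
  have hRabs : |R| ≤ 1 := by
    have := abs_real_inner_le_norm ua ub; rw [hua, hub] at this; linarith
  have hPm : -1 ≤ P := (abs_le.1 hPabs).1
  have hQm : -1 ≤ Q := (abs_le.1 hQabs).1
  have hRm : -1 ≤ R := (abs_le.1 hRabs).1
  -- Gram identity and sign
  have hgram := barrow_gram ua ub uc hua hub huc
  have hsign : 1 + P + Q + R ≤ 0 := by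
    have h0 : (l*a) • ua + (m*b) • ub + (n*c) • uc = 0 := by
      rw [mul_smul, mul_smul, mul_smul, hvaeq, hvbeq, hvceq]
      exact hcomb
    exact barrow_sign ua ub uc hua hub huc (l*a) (m*b) (n*c)
      (mul_pos hl ha0) (mul_pos hm hb0) (mul_pos hn hc0) h0
  -- per-vertex bounds
  set X := Real.sqrt ((1+P)/2) with hXdef
  set Y := Real.sqrt ((1+Q)/2) with hYdef
  set Z := Real.sqrt ((1+R)/2) with hZdef
  have hdA : dist M A' ≤ Real.sqrt (b*c) * X := by
    have ha' : InnerProductGeometry.angle vb (A' - M) = InnerProductGeometry.angle vc (A' - M) := by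
      rw [hvbdef, hvcdef]
      simpa [EuclideanGeometry.angle, vsub_eq_sub] using ha
    have hzA : A' - M ∈ segment ℝ vb vc := by
      obtain ⟨s, t, hs, ht, hst, hsum'⟩ := hA'
      refine ⟨s, t, hs, ht, hst, ?_⟩
      rw [hvbdef, hvcdef, ← hsum']
      have h7 : s • (B - M) + t • (C - M) = s • B + t • C - (s+t) • M := by module
      rw [h7, hst, one_smul]
    have hkey := barrow_key vb vc (A' - M) hvb0 hvc0 hPlt hPgt hzA ha'
    have h5 : (dist M A')^2 ≤ (b*c) * ((1+P)/2) := by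
      rw [dist_eq_norm, norm_sub_rev]
      rw [hipP] at hkey
      linarith [hkey]
    calc dist M A' = Real.sqrt ((dist M A')^2) := (Real.sqrt_sq dist_nonneg).symm
      _ ≤ Real.sqrt ((b*c) * ((1+P)/2)) := Real.sqrt_le_sqrt h5
      _ = Real.sqrt (b*c) * X := by rw [Real.sqrt_mul (by positivity)]
  have hdB : dist M B' ≤ Real.sqrt (c*a) * Y := by
    have hb' : InnerProductGeometry.angle vc (B' - M) = InnerProductGeometry.angle va (B' - M) := by
      rw [hvcdef, hvadef]
      simpa [EuclideanGeometry.angle, vsub_eq_sub] using hb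
    have hzB : B' - M ∈ segment ℝ vc va := by
      obtain ⟨s, t, hs, ht, hst, hsum'⟩ := hB'
      refine ⟨s, t, hs, ht, hst, ?_⟩
      rw [hvcdef, hvadef, ← hsum']
      have h7 : s • (C - M) + t • (A - M) = s • C + t • A - (s+t) • M := by module
      rw [h7, hst, one_smul]
    have hkey := barrow_key vc va (B' - M) hvc0 hva0 hQlt hQgt hzB hb'
    have h5 : (dist M B')^2 ≤ (c*a) * ((1+Q)/2) := by
      rw [dist_eq_norm, norm_sub_rev]
      rw [hipQ] at hkey
      linarith [hkey]
    calc dist M B' = Real.sqrt ((dist M B')^2) := (Real.sqrt_sq dist_nonneg).symm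
      _ ≤ Real.sqrt ((c*a) * ((1+Q)/2)) := Real.sqrt_le_sqrt h5
      _ = Real.sqrt (c*a) * Y := by rw [Real.sqrt_mul (by positivity)]
  have hdC : dist M C' ≤ Real.sqrt (a*b) * Z := by
    have hc' : InnerProductGeometry.angle va (C' - M) = InnerProductGeometry.angle vb (C' - M) := by
      rw [hvadef, hvbdef]
      simpa [EuclideanGeometry.angle, vsub_eq_sub] using hc
    have hzC : C' - M ∈ segment ℝ va vb := by
      obtain ⟨s, t, hs, ht, hst, hsum'⟩ := hC'
      refine ⟨s, t, hs, ht, hst, ?_⟩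
      rw [hvadef, hvbdef, ← hsum']
      have h7 : s • (A - M) + t • (B - M) = s • A + t • B - (s+t) • M := by module
      rw [h7, hst, one_smul]
    have hkey := barrow_key va vb (C' - M) hva0 hvb0 hRlt hRgt hzC hc'
    have h5 : (dist M C')^2 ≤ (a*b) * ((1+R)/2) := by
      rw [dist_eq_norm, norm_sub_rev]
      rw [hipR] at hkey
      linarith [hkey]
    calc dist M C' = Real.sqrt ((dist M C')^2) := (Real.sqrt_sq dist_nonneg).symm
      _ ≤ Real.sqrt ((a*b) * ((1+R)/2)) := Real.sqrt_le_sqrt h5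
      _ = Real.sqrt (a*b) * Z := by rw [Real.sqrt_mul (by positivity)]
  -- half-angle algebra
  have hX2 : X^2 = (1+P)/2 := Real.sq_sqrt (by linarith)
  have hY2 : Y^2 = (1+Q)/2 := Real.sq_sqrt (by linarith)
  have hZ2 : Z^2 = (1+R)/2 := Real.sq_sqrt (by linarith)
  have hXYZ : X*Y*Z = -(1+P+Q+R)/4 := by
    have h6 : X*Y*Z = Real.sqrt (((1+P)/2)*((1+Q)/2)*((1+R)/2)) := by
      rw [Real.sqrt_mul (mul_nonneg (by linarith : (0:ℝ) ≤ (1+P)/2) (by linarith : (0:ℝ) ≤ (1+Q)/2)),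
        Real.sqrt_mul (by linarith : (0:ℝ) ≤ (1+P)/2)]
    have h7 : ((1+P)/2)*((1+Q)/2)*((1+R)/2) = (-(1+P+Q+R)/4)^2 := by
      linear_combination (1/16) * hgram
    rw [h6, h7, Real.sqrt_sq (by linarith)]
  have hid : X^2 + Y^2 + Z^2 + 2*X*Y*Z = 1 := by
    linear_combination hX2 + hY2 + hZ2 + 2*hXYZ
  have hY1 : Y ≤ 1 := by
    rw [show (1:ℝ) = Real.sqrt 1 by simp [Real.sqrt_one]]
    exact Real.sqrt_le_sqrt (by linarith)
  have hZ1 : Z ≤ 1 := by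
    rw [show (1:ℝ) = Real.sqrt 1 by simp [Real.sqrt_one]]
    exact Real.sqrt_le_sqrt (by linarith)
  have halg := barrow_alg (Real.sqrt a) (Real.sqrt b) (Real.sqrt c) X Y Z
    (Real.sqrt_nonneg _) (Real.sqrt_nonneg _) (Real.sqrt_nonneg _) hY1 hZ1 hid
  -- final assembly
  have hdMA : dist M A = a := by rw [hadef, hvadef, dist_eq_norm, norm_sub_rev]
  have hdMB : dist M B = b := by rw [hbdef, hvbdef, dist_eq_norm, norm_sub_rev]
  have hdMC : dist M C = c := by rw [hcdef, hvcdef, dist_eq_norm, norm_sub_rev]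
  have hsa : Real.sqrt a ^ 2 = a := Real.sq_sqrt ha0.le
  have hsb : Real.sqrt b ^ 2 = b := Real.sq_sqrt hb0.le
  have hsc : Real.sqrt c ^ 2 = c := Real.sq_sqrt hc0.le
  have hmbc : Real.sqrt (b*c) = Real.sqrt b * Real.sqrt c := Real.sqrt_mul hb0.le c
  have hmca : Real.sqrt (c*a) = Real.sqrt c * Real.sqrt a := Real.sqrt_mul hc0.le a
  have hmab : Real.sqrt (a*b) = Real.sqrt a * Real.sqrt b := Real.sqrt_mul ha0.le b
  rw [ge_iff_le, hdMA, hdMB, hdMC]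
  calc 2 * (dist M A' + dist M B' + dist M C')
      ≤ 2 * (Real.sqrt (b*c) * X + Real.sqrt (c*a) * Y + Real.sqrt (a*b) * Z) := by
        linarith [hdA, hdB, hdC]
    _ = 2 * (Real.sqrt b * Real.sqrt c * X + Real.sqrt c * Real.sqrt a * Y
        + Real.sqrt a * Real.sqrt b * Z) := by rw [hmbc, hmca, hmab]
    _ ≤ Real.sqrt a ^ 2 + Real.sqrt b ^ 2 + Real.sqrt c ^ 2 := halg
    _ = a + b + c := by rw [hsa, hsb, hsc]
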